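/- Let Q ∈ ℝⁿˣⁿ be symmetric with exactly one negative eigenvalue, and let Q = PᵀDP with P orthogonal (rows the normalized eigenvectors) and D = diag(σ₁, …, σₙ) where σ_i ≥ 0 for i = 1, …, n−1 and σₙ < 0. Let C ⊆ ℝⁿ be a polyhedral cone. Then the homogeneous quadratic program minimize ½vᵀQv subject to v ∈ C is unbounded below if and only if at least one of the following two convex quadratic programs is feasible and has a negative optimal objective value: minimize ½∑_{i=1}^{n−1} σ_i y_i² − ½|σₙ| over (y, v̂) subject to v̂ ∈ C, y = P v̂ and yₙ = 1 (respectively yₙ = −1). -/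

import Mathlib

open Filter Topology Set

noncomputable section

/-- The objective of the auxiliary convex programs:
`½ ∑_{i ≠ last} σᵢ yᵢ² − ½ |σ_last|`. -/
def auxObj {n : ℕ} (σ : Fin (n + 1) → ℝ) (y : Fin (n + 1) → ℝ) : ℝ :=
  (1/2) * (∑ i ∈ Finset.univ.erase (Fin.last n), σ i * y i ^ 2)
    - (1/2) * |σ (Fin.last n)|

variable {E F G : Type*} [AddCommGroup E] [Module ℝ E] [AddCommGroup F] [Module ℝ F]
  [AddCommGroup G] [Module ℝ G]

/-- A set is "list-polyhedral" if it is cut out by finitely many affine inequalities. -/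
def IsPolyL (S : Set E) : Prop :=
  ∃ l : List ((E →ₗ[ℝ] ℝ) × ℝ), S = {x | ∀ p ∈ l, p.1 x ≤ p.2}

theorem IsPolyL.preimage {S : Set F} (h : IsPolyL S) (f : E →ₗ[ℝ] F) :
    IsPolyL (f ⁻¹' S) := by
  obtain ⟨l, rfl⟩ := h
  refine ⟨l.map fun p => (p.1.comp f, p.2), ?_⟩
  ext x
  constructor
  · intro h p hp
    simp only [List.mem_map] at hp
    obtain ⟨q, hq, rfl⟩ := hp
    exact h q hq
  · intro h q hq
    exact h (q.1.comp f, q.2) (List.mem_map.mpr ⟨q, hq, rfl⟩)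

theorem IsPolyL.image_equiv {S : Set E} (h : IsPolyL S) (e : E ≃ₗ[ℝ] F) :
    IsPolyL (e '' S) := by
  have : (e : E →ₗ[ℝ] F) '' S = (e.symm : F →ₗ[ℝ] E) ⁻¹' S := by
    ext x; simp [Set.mem_image, Set.mem_preimage]
    constructor
    · rintro ⟨y, hy, rfl⟩; simpa using hy
    · intro hx; exact ⟨e.symm x, hx, by simp⟩
  rw [show e '' S = (e : E →ₗ[ℝ] F) '' S from rfl, this]
  exact h.preimage _

theorem exists_le_list (U : List ℝ) : ∃ t : ℝ, ∀ b ∈ U, t ≤ b := by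
  induction U with
  | nil => exact ⟨0, by simp⟩
  | cons b U ih =>
    obtain ⟨t, ht⟩ := ih
    exact ⟨min t b, by
      intro c hc
      rcases List.mem_cons.mp hc with rfl | hc
      · exact min_le_right _ _
      · exact le_trans (min_le_left _ _) (ht c hc)⟩

theorem exists_between_lists (L U : List ℝ) (h : ∀ a ∈ L, ∀ b ∈ U, a ≤ b) :
    ∃ t : ℝ, (∀ a ∈ L, a ≤ t) ∧ (∀ b ∈ U, t ≤ b) := by
  rcases eq_or_ne L [] with rfl | hL
  · obtain ⟨t, ht⟩ := exists_le_list U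
    exact ⟨t, by simp, ht⟩
  · have hne : L.toFinset.Nonempty := by
      rw [Finset.nonempty_iff_ne_empty]
      simpa using hL
    set a := L.toFinset.max' hne with ha
    have haL : a ∈ L := by
      have := L.toFinset.max'_mem hne
      simpa using this
    exact ⟨a, fun a' ha' => L.toFinset.le_max' a' (by simpa using ha'),
      fun b hb => h a haL b hb⟩

/-- Fourier–Motzkin elimination: the projection of a list-polyhedron in `ℝ × E` to `E`
is a list-polyhedron. -/
theorem IsPolyL.proj_fst {S : Set (ℝ × E)} (h : IsPolyL S) :
    IsPolyL (Prod.snd '' S) := by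
  classical
  obtain ⟨l, rfl⟩ := h
  set a : ((ℝ × E) →ₗ[ℝ] ℝ) × ℝ → ℝ := fun p => p.1 (1, 0) with ha
  set f : ((ℝ × E) →ₗ[ℝ] ℝ) × ℝ → (E →ₗ[ℝ] ℝ) := fun p => p.1.comp (LinearMap.inr ℝ ℝ E)
    with hf
  have key : ∀ p, ∀ t : ℝ, ∀ x : E, p.1 (t, x) = a p * t + f p x := by
    intro p t x
    have h1 : (t, x) = t • ((1:ℝ), (0:E)) + ((0:ℝ), x) := by
      simp [Prod.ext_iff]
    rw [h1, map_add, map_smul, smul_eq_mul, mul_comm]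
    rfl
  set Z := l.filter (fun p => decide (a p = 0)) with hZ
  set Pos := l.filter (fun p => decide (0 < a p)) with hPos
  set Neg := l.filter (fun p => decide (a p < 0)) with hNeg
  refine ⟨(Z.map fun p => (f p, p.2)) ++
    (Neg.flatMap fun q => Pos.map fun r =>
      (a r • f q - a q • f r, a r * q.2 - a q * r.2)), ?_⟩
  ext x
  constructor
  · rintro ⟨⟨t, x⟩, hS, rfl⟩
    intro c hc
    rcases List.mem_append.mp hc with hc | hc
    · obtain ⟨p, hpZ, rfl⟩ := List.mem_map.mp hc
      obtain ⟨hpl, hp0⟩ := List.mem_filter.mp hpZ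
      have hp0 : a p = 0 := of_decide_eq_true hp0
      have := hS p hpl
      rw [key p t x, hp0] at this
      simpa using this
    · obtain ⟨q, hqN, hc⟩ := List.mem_flatMap.mp hc
      obtain ⟨r, hrP, rfl⟩ := List.mem_map.mp hc
      obtain ⟨hql, hq0⟩ := List.mem_filter.mp hqN
      have hq0 : a q < 0 := of_decide_eq_true hq0
      obtain ⟨hrl, hr0⟩ := List.mem_filter.mp hrP
      have hr0 : 0 < a r := of_decide_eq_true hr0
      have hq := hS q hql; rw [key q t x] at hq
      have hr := hS r hrl; rw [key r t x] at hr
      have h1 : a r * (a q * t + f q x) ≤ a r * q.2 :=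
        mul_le_mul_of_nonneg_left hq hr0.le
      have h2 : (-a q) * (a r * t + f r x) ≤ (-a q) * r.2 :=
        mul_le_mul_of_nonneg_left hr (by linarith)
      simp only [LinearMap.sub_apply, LinearMap.smul_apply, smul_eq_mul]
      nlinarith [h1, h2]
  · intro hx
    have pair : ∀ q ∈ Neg, ∀ r ∈ Pos,
        (q.2 - f q x) / a q ≤ (r.2 - f r x) / a r := by
      intro q hqN r hrP
      obtain ⟨hql, hq0⟩ := List.mem_filter.mp hqN
      have hq0 : a q < 0 := of_decide_eq_true hq0
      obtain ⟨hrl, hr0⟩ := List.mem_filter.mp hrP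
      have hr0 : 0 < a r := of_decide_eq_true hr0
      have hcon := hx (a r • f q - a q • f r, a r * q.2 - a q * r.2)
        (List.mem_append.mpr (Or.inr (List.mem_flatMap.mpr
          ⟨q, hqN, List.mem_map.mpr ⟨r, hrP, rfl⟩⟩)))
      simp only [LinearMap.sub_apply, LinearMap.smul_apply, smul_eq_mul] at hcon
      have e1 : (q.2 - f q x) / a q = (f q x - q.2) / (-a q) := by
        rw [← neg_div_neg_eq]; ring_nf
      rw [e1, div_le_div_iff₀ (by linarith) hr0]
      nlinarith [hcon]
    obtain ⟨t, htL, htU⟩ := exists_between_lists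
      (Neg.map fun q => (q.2 - f q x) / a q)
      (Pos.map fun r => (r.2 - f r x) / a r) (by
        intro lo hlo up hup
        obtain ⟨q, hqN, rfl⟩ := List.mem_map.mp hlo
        obtain ⟨r, hrP, rfl⟩ := List.mem_map.mp hup
        exact pair q hqN r hrP)
    refine ⟨(t, x), ?_, rfl⟩
    intro p hpl
    rw [key p t x]
    rcases lt_trichotomy (a p) 0 with hp0 | hp0 | hp0
    · have hpN : p ∈ Neg := List.mem_filter.mpr ⟨hpl, decide_eq_true hp0⟩
      have := htL _ (List.mem_map.mpr ⟨p, hpN, rfl⟩)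
      rw [div_le_iff_of_neg hp0] at this
      linarith
    · have hpZ : p ∈ Z := List.mem_filter.mpr ⟨hpl, decide_eq_true hp0⟩
      have := hx (f p, p.2) (List.mem_append.mpr (Or.inl (List.mem_map.mpr ⟨p, hpZ, rfl⟩)))
      simp only at this
      rw [hp0]
      linarith
    · have hpP : p ∈ Pos := List.mem_filter.mpr ⟨hpl, decide_eq_true hp0⟩
      have := htU _ (List.mem_map.mpr ⟨p, hpP, rfl⟩)
      rw [le_div_iff₀ hp0] at this
      linarith

/-- The linear equivalence `(Fin (m+1) → ℝ) × F ≃ₗ ℝ × ((Fin m → ℝ) × F)`. -/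
def splitEquiv (m : ℕ) (F : Type*) [AddCommGroup F] [Module ℝ F] :
    ((Fin (m + 1) → ℝ) × F) ≃ₗ[ℝ] ℝ × ((Fin m → ℝ) × F) where
  toFun p := (p.1 0, (Fin.tail p.1, p.2))
  invFun q := (Fin.cons q.1 q.2.1, q.2.2)
  map_add' p q := rfl
  map_smul' c p := rfl
  left_inv p := by simp [Fin.cons_self_tail]
  right_inv q := by simp [Fin.tail_cons]

theorem IsPolyL.proj_pi : ∀ (m : ℕ) {F : Type*} [AddCommGroup F] [Module ℝ F]
    (S : Set ((Fin m → ℝ) × F)), IsPolyL S → IsPolyL (Prod.snd '' S) := by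
  intro m
  induction m with
  | zero =>
    intro F _ _ S hS
    have : Prod.snd '' S = (LinearMap.prod (0 : F →ₗ[ℝ] (Fin 0 → ℝ)) LinearMap.id) ⁻¹' S := by
      ext y
      constructor
      · rintro ⟨⟨v, y⟩, hv, rfl⟩
        have h0 : (LinearMap.prod (0 : F →ₗ[ℝ] (Fin 0 → ℝ)) LinearMap.id) y = (v, y) :=
          Prod.ext_iff.mpr ⟨Subsingleton.elim _ _, rfl⟩
        rw [Set.mem_preimage, h0]
        exact hv
      · intro hy
        exact ⟨_, hy, rfl⟩
    rw [this]
    exact hS.preimage _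
  | succ m ih =>
    intro F _ _ S hS
    have h1 : IsPolyL ((splitEquiv m F) '' S) := hS.image_equiv _
    have h2 : IsPolyL (Prod.snd '' ((splitEquiv m F) '' S)) := h1.proj_fst
    have h3 : IsPolyL (Prod.snd '' (Prod.snd '' ((splitEquiv m F) '' S))) := ih _ h2
    have h4 : Prod.snd '' (Prod.snd '' ((splitEquiv m F) '' S)) = Prod.snd '' S := by
      rw [Set.image_image, Set.image_image]
      rfl
    rwa [h4] at h3

/-- The image of a list-polyhedron under a linear map into `Fin k → ℝ`-like spaces. -/
theorem IsPolyL.image_linear {m k : ℕ} {F : Type*} [AddCommGroup F] [Module ℝ F]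
    (coord : Fin k → (F →ₗ[ℝ] ℝ))
    (hcoord : ∀ x y : F, (∀ i, coord i x = coord i y) → x = y)
    {S : Set (Fin m → ℝ)} (hS : IsPolyL S) (L : (Fin m → ℝ) →ₗ[ℝ] F) :
    IsPolyL (L '' S) := by
  classical
  -- the graph
  set Γ : Set ((Fin m → ℝ) × F) :=
    {p | p.1 ∈ S ∧ ∀ i, coord i (L p.1) = coord i p.2} with hΓ
  have hΓpoly : IsPolyL Γ := by
    obtain ⟨l, rfl⟩ := hS
    refine ⟨(l.map fun p => (p.1.comp (LinearMap.fst ℝ _ _), p.2)) ++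
      ((List.finRange k).flatMap fun i =>
        [((coord i).comp (L.comp (LinearMap.fst ℝ _ _)) - (coord i).comp (LinearMap.snd ℝ _ _), 0),
         ((coord i).comp (LinearMap.snd ℝ _ _) - (coord i).comp (L.comp (LinearMap.fst ℝ _ _)), 0)]), ?_⟩
    ext ⟨v, y⟩
    constructor
    · rintro ⟨hv, hy⟩ c hc
      rcases List.mem_append.mp hc with hc | hc
      · obtain ⟨p, hpl, rfl⟩ := List.mem_map.mp hc
        exact hv p hpl
      · obtain ⟨i, _, hc⟩ := List.mem_flatMap.mp hc
        have hi := hy i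
        rcases List.mem_cons.mp hc with rfl | hc
        · simp only [LinearMap.sub_apply, LinearMap.comp_apply, LinearMap.fst_apply,
            LinearMap.snd_apply]
          simp [hi]
        · rcases List.mem_cons.mp hc with rfl | hc
          · simp only [LinearMap.sub_apply, LinearMap.comp_apply, LinearMap.fst_apply,
              LinearMap.snd_apply]
            simp [hi]
          · simp at hc
    · intro hc
      constructor
      · intro p hpl
        exact hc (p.1.comp (LinearMap.fst ℝ _ _), p.2)
          (List.mem_append.mpr (Or.inl (List.mem_map.mpr ⟨p, hpl, rfl⟩)))
      · intro i
        have h1 := hc _ (List.mem_append.mpr (Or.inr (List.mem_flatMap.mpr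
          ⟨i, List.mem_finRange i, List.mem_cons_self⟩)))
        have h2 := hc _ (List.mem_append.mpr (Or.inr (List.mem_flatMap.mpr
          ⟨i, List.mem_finRange i, List.mem_cons_of_mem _ (List.mem_cons_self)⟩)))
        simp only [LinearMap.sub_apply, LinearMap.comp_apply, LinearMap.fst_apply,
          LinearMap.snd_apply] at h1 h2
        linarith
  have himg : L '' S = Prod.snd '' Γ := by
    ext y
    constructor
    · rintro ⟨v, hv, rfl⟩
      exact ⟨(v, L v), ⟨hv, fun i => rfl⟩, rfl⟩
    · rintro ⟨⟨v, y⟩, ⟨hv, hy⟩, rfl⟩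
      exact ⟨v, hv, hcoord _ _ hy⟩
  rw [himg]
  exact hΓpoly.proj_pi _

theorem IsPolyL.convex {S : Set E} (h : IsPolyL S) : Convex ℝ S := by
  obtain ⟨l, rfl⟩ := h
  intro x hx y hy s t hs ht hst p hp
  have h1 := hx p hp
  have h2 := hy p hp
  have : p.1 (s • x + t • y) = s * p.1 x + t * p.1 y := by
    rw [map_add, map_smul, map_smul]; rfl
  rw [Set.mem_setOf_eq] at *
  calc p.1 (s • x + t • y) = s * p.1 x + t * p.1 y := this
    _ ≤ s * p.2 + t * p.2 := by
        have := mul_le_mul_of_nonneg_left h1 hs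
        have := mul_le_mul_of_nonneg_left h2 ht
        linarith
    _ = p.2 := by rw [← add_mul, hst, one_mul]

theorem IsPolyL.isClosed {k : ℕ} {S : Set (EuclideanSpace ℝ (Fin k))}
    (h : IsPolyL S) : IsClosed S := by
  obtain ⟨l, rfl⟩ := h
  have : {x : EuclideanSpace ℝ (Fin k) | ∀ p ∈ l, p.1 x ≤ p.2} =
      ⋂ p ∈ l, {x : EuclideanSpace ℝ (Fin k) | p.1 x ≤ p.2} := by
    ext x; simp
  rw [this]
  exact isClosed_biInter fun p _ =>
    isClosed_le (p.1.continuous_of_finiteDimensional) continuous_const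

/-- Attainment of the minimal value of `‖L v‖` over a nonempty list-polyhedron. -/
theorem IsPolyL.exists_min_norm {m k : ℕ} {S : Set (Fin m → ℝ)} (hS : IsPolyL S)
    (hne : S.Nonempty) (L : (Fin m → ℝ) →ₗ[ℝ] EuclideanSpace ℝ (Fin k)) :
    ∃ v ∈ S, ∀ w ∈ S, ‖L v‖ ≤ ‖L w‖ := by
  have himg : IsPolyL (L '' S) := by
    exact hS.image_linear
      (fun i => ((EuclideanSpace.proj i : EuclideanSpace ℝ (Fin k) →L[ℝ] ℝ) :
        EuclideanSpace ℝ (Fin k) →ₗ[ℝ] ℝ))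
      (fun x y h => PiLp.ext h) L
  have hconv : Convex ℝ (L '' S) := himg.convex
  have hclosed : IsClosed (L '' S) := himg.isClosed
  have hne' : (L '' S).Nonempty := hne.image _
  obtain ⟨z, hzT, hz⟩ := exists_norm_eq_iInf_of_complete_convex hne'
    hclosed.isComplete hconv 0
  obtain ⟨v, hvS, rfl⟩ := hzT
  refine ⟨v, hvS, fun w hw => ?_⟩
  have h1 : ‖(0 : EuclideanSpace ℝ (Fin k)) - L v‖ ≤ ‖(0 : EuclideanSpace ℝ (Fin k)) - L w‖ := by
    rw [hz]
    exact ciInf_le ⟨0, Set.forall_mem_range.2 fun _ => norm_nonneg _⟩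
      (⟨L w, ⟨w, hw, rfl⟩⟩ : L '' S)
  simpa [norm_sub_rev, zero_sub, norm_neg] using h1

open Finset Matrix in
theorem quad_eq {n : ℕ} (σ : Fin (n + 1) → ℝ) (P : Matrix (Fin (n + 1)) (Fin (n + 1)) ℝ)
    (v : Fin (n + 1) → ℝ) :
    ∑ i, ∑ j, (P.transpose * Matrix.diagonal σ * P) i j * v i * v j
      = ∑ k, σ k * (P.mulVec v k) ^ 2 := by
  have h1 : ∑ i, ∑ j, (P.transpose * Matrix.diagonal σ * P) i j * v i * v j
      = v ⬝ᵥ (P.transpose * Matrix.diagonal σ * P).mulVec v := by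
    simp only [dotProduct, Matrix.mulVec, Finset.mul_sum]
    exact Finset.sum_congr rfl fun i _ => Finset.sum_congr rfl fun j _ => by ring
  rw [h1, show P.transpose * Matrix.diagonal σ * P
      = P.transpose * (Matrix.diagonal σ * P) by rw [Matrix.mul_assoc],
    ← Matrix.mulVec_mulVec, dotProduct_mulVec, Matrix.vecMul_transpose,
    ← Matrix.mulVec_mulVec]
  simp only [dotProduct, Matrix.mulVec_diagonal]
  exact Finset.sum_congr rfl fun k _ => by ring


/-- Let `Q = Pᵀ D P` be symmetric with exactly one negative eigenvalue
(`D = diag σ`, `σᵢ ≥ 0` for `i ≠ last`, `σ_last < 0`, `P` orthogonal) and let `C` be a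
polyhedral cone.  The homogeneous QP `min_{v∈C} ½ vᵀQv` is unbounded below iff one of the
two convex QPs (with constraints `v̂ ∈ C`, `y = P v̂`, `y_last = ±1`) is feasible and
attains a negative optimal objective value. -/
theorem stmt15 {n mC : ℕ} (σ : Fin (n + 1) → ℝ)
    (hσpos : ∀ i : Fin (n + 1), i ≠ Fin.last n → 0 ≤ σ i)
    (hσneg : σ (Fin.last n) < 0)
    (P : Matrix (Fin (n + 1)) (Fin (n + 1)) ℝ) (hP : P.transpose * P = 1)
    (Q : Matrix (Fin (n + 1)) (Fin (n + 1)) ℝ)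
    (hQ : Q = P.transpose * Matrix.diagonal σ * P)
    (A : Matrix (Fin mC) (Fin (n + 1)) ℝ) (C : Set (Fin (n + 1) → ℝ))
    (hC : C = {v | ∀ i, (∑ j, A i j * v j) ≤ 0}) :
    -- the homogeneous QP is unbounded below on C
    (∀ M : ℝ, ∃ v ∈ C, (1/2) * (∑ i, ∑ j, Q i j * v i * v j) < M) ↔
    -- one of the two auxiliary convex QPs is feasible with negative attained optimal value
    (∃ ε : ℝ, (ε = 1 ∨ ε = -1) ∧
      ∃ y vhat : Fin (n + 1) → ℝ,
        (vhat ∈ C ∧ y = P.mulVec vhat ∧ y (Fin.last n) = ε) ∧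
        auxObj σ y < 0 ∧
        (∀ y' vhat' : Fin (n + 1) → ℝ,
          (vhat' ∈ C ∧ y' = P.mulVec vhat' ∧ y' (Fin.last n) = ε) →
          auxObj σ y ≤ auxObj σ y')) := by
  classical
  subst hQ hC
  set g : (Fin (n + 1) → ℝ) → ℝ := fun v => ∑ k, σ k * (P.mulVec v k) ^ 2 with hgdef
  have hquad : ∀ v : Fin (n + 1) → ℝ,
      ∑ i, ∑ j, (P.transpose * Matrix.diagonal σ * P) i j * v i * v j = g v :=
    fun v => quad_eq σ P v
  have habs : |σ (Fin.last n)| = -σ (Fin.last n) := abs_of_neg hσneg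
  have cone : ∀ v ∈ {v : Fin (n+1) → ℝ | ∀ i, (∑ j, A i j * v j) ≤ 0},
      ∀ t : ℝ, 0 ≤ t → t • v ∈ {v : Fin (n+1) → ℝ | ∀ i, (∑ j, A i j * v j) ≤ 0} := by
    intro v hv t ht i
    have : ∑ j, A i j * (t • v) j = t * ∑ j, A i j * v j := by
      rw [Finset.mul_sum]
      exact Finset.sum_congr rfl fun j _ => by
        simp [smul_eq_mul]; ring
    rw [this]
    exact mul_nonpos_iff.mpr (Or.inl ⟨ht, hv i⟩)
  have gscale : ∀ (v : Fin (n+1) → ℝ) (t : ℝ), g (t • v) = t ^ 2 * g v := by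
    intro v t
    simp only [hgdef, Matrix.mulVec_smul, Finset.mul_sum]
    exact Finset.sum_congr rfl fun k _ => by
      simp [smul_eq_mul]; ring
  have auxcalc : ∀ y : Fin (n + 1) → ℝ, (y (Fin.last n)) ^ 2 = 1 →
      auxObj σ y = (1/2) * ∑ k, σ k * y k ^ 2 := by
    intro y hy
    have hsplit : ∑ i ∈ Finset.univ.erase (Fin.last n), σ i * y i ^ 2
        + σ (Fin.last n) * y (Fin.last n) ^ 2 = ∑ i, σ i * y i ^ 2 :=
      Finset.sum_erase_add Finset.univ (fun i => σ i * y i ^ 2)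
        (Finset.mem_univ (Fin.last n))
    simp only [auxObj]
    rw [← hsplit, hy, habs]
    ring
  have hsq : ∀ ε : ℝ, (ε = 1 ∨ ε = -1) → ε ^ 2 = 1 := by
    rintro ε (rfl | rfl) <;> norm_num
  constructor
  · -- unbounded → auxiliary program has a minimizer with negative value
    intro hub
    obtain ⟨v, hvC, hv0⟩ := hub 0
    rw [hquad] at hv0
    set y := P.mulVec v with hydef
    have herase : 0 ≤ ∑ i ∈ Finset.univ.erase (Fin.last n), σ i * y i ^ 2 :=
      Finset.sum_nonneg fun i hi =>
        mul_nonneg (hσpos i (Finset.ne_of_mem_erase hi)) (sq_nonneg _)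
    have hsplit : ∑ i ∈ Finset.univ.erase (Fin.last n), σ i * y i ^ 2
        + σ (Fin.last n) * y (Fin.last n) ^ 2 = ∑ i, σ i * y i ^ 2 :=
      Finset.sum_erase_add Finset.univ (fun i => σ i * y i ^ 2)
        (Finset.mem_univ (Fin.last n))
    have hgv : g v < 0 := by linarith
    have hyl : y (Fin.last n) ≠ 0 := by
      intro h0
      have : g v = ∑ i ∈ Finset.univ.erase (Fin.last n), σ i * y i ^ 2 := by
        rw [hgdef]
        simp only
        rw [← hsplit, h0]
        ring
      linarith [this ▸ hgv]
    have ht : 0 < |y (Fin.last n)| := abs_pos.mpr hyl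
    set t : ℝ := |y (Fin.last n)| with htdef
    set ε : ℝ := y (Fin.last n) / t with hεdef
    have hε : ε = 1 ∨ ε = -1 := by
      rcases hyl.lt_or_gt with h | h
      · right
        rw [hεdef, htdef, abs_of_neg h, div_neg, div_self h.ne]
      · left
        rw [hεdef, htdef, abs_of_pos h, div_self h.ne']
    have hε2 : ε ^ 2 = 1 := hsq ε hε
    set v₀ : Fin (n+1) → ℝ := t⁻¹ • v with hv₀def
    have hv₀C : v₀ ∈ {v : Fin (n+1) → ℝ | ∀ i, (∑ j, A i j * v j) ≤ 0} :=
      cone v hvC t⁻¹ (inv_nonneg.mpr ht.le)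
    have hy₀ : P.mulVec v₀ = t⁻¹ • y := by
      rw [hv₀def, Matrix.mulVec_smul, hydef]
    have hy₀l : P.mulVec v₀ (Fin.last n) = ε := by
      rw [hy₀, hεdef]
      simp [smul_eq_mul, div_eq_inv_mul]
    have hgv₀ : g v₀ < 0 := by
      rw [hv₀def, gscale]
      exact mul_neg_of_pos_of_neg (pow_pos (inv_pos.mpr ht) 2) hgv
    -- the feasible set of the auxiliary program
    set S : Set (Fin (n+1) → ℝ) :=
      {w | (∀ i, (∑ j, A i j * w j) ≤ 0) ∧ P.mulVec w (Fin.last n) = ε} with hSdef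
    have hSpoly : IsPolyL S := by
      refine ⟨((List.finRange mC).map fun i =>
          ((LinearMap.proj i).comp A.mulVecLin, (0:ℝ))) ++
        [((LinearMap.proj (Fin.last n)).comp P.mulVecLin, ε),
         (-(LinearMap.proj (Fin.last n)).comp P.mulVecLin, -ε)], ?_⟩
      ext w
      constructor
      · rintro ⟨h1, h2⟩ p hp
        rcases List.mem_append.mp hp with hp | hp
        · obtain ⟨i, _, rfl⟩ := List.mem_map.mp hp
          simpa [Matrix.mulVecLin_apply, Matrix.mulVec, dotProduct] using h1 i
        · rcases List.mem_cons.mp hp with rfl | hp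
          · simpa [Matrix.mulVecLin_apply] using le_of_eq h2
          · rcases List.mem_cons.mp hp with rfl | hp
            · simp only [LinearMap.neg_apply, LinearMap.comp_apply, Matrix.mulVecLin_apply,
                LinearMap.proj_apply]
              rw [h2]
            · simp at hp
      · intro hw
        constructor
        · intro i
          have := hw _ (List.mem_append.mpr (Or.inl (List.mem_map.mpr
            ⟨i, List.mem_finRange i, rfl⟩)))
          simpa [Matrix.mulVecLin_apply, Matrix.mulVec, dotProduct] using this
        · have h1 := hw _ (List.mem_append.mpr (Or.inr (List.mem_cons_self)))
          have h2 := hw _ (List.mem_append.mpr (Or.inr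
            (List.mem_cons_of_mem _ (List.mem_cons_self))))
          simp only [LinearMap.neg_apply, LinearMap.comp_apply, Matrix.mulVecLin_apply,
            LinearMap.proj_apply, neg_le_neg_iff] at h1 h2
          linarith
    have hSne : S.Nonempty := ⟨v₀, hv₀C, hy₀l⟩
    -- the linear map whose norm squared is the variable part of the objective
    set L : (Fin (n+1) → ℝ) →ₗ[ℝ] EuclideanSpace ℝ (Fin (n+1)) :=
      { toFun := fun w => WithLp.toLp 2 (fun i => if i = Fin.last n then 0 else Real.sqrt (σ i) * P.mulVec w i)
        map_add' := by
          intro w₁ w₂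
          ext i
          by_cases h : i = Fin.last n <;>
            simp [h, Matrix.mulVec_add, mul_add]
        map_smul' := by
          intro c w
          ext i
          by_cases h : i = Fin.last n <;>
            simp [h, Matrix.mulVec_smul, smul_eq_mul] <;> ring } with hLdef
    have hLapp : ∀ (w : Fin (n+1) → ℝ) (i : Fin (n+1)),
        L w i = if i = Fin.last n then 0 else Real.sqrt (σ i) * P.mulVec w i := fun _ _ => rfl
    have hLnorm : ∀ w : Fin (n+1) → ℝ,
        ‖L w‖ ^ 2 = ∑ i ∈ Finset.univ.erase (Fin.last n), σ i * (P.mulVec w i) ^ 2 := by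
      intro w
      rw [EuclideanSpace.norm_eq, Real.sq_sqrt (Finset.sum_nonneg fun i _ => by positivity)]
      rw [← Finset.sum_erase_add Finset.univ _ (Finset.mem_univ (Fin.last n))]
      have hlast : ‖L w (Fin.last n)‖ ^ 2 = 0 := by
        rw [hLapp]; simp
      rw [hlast, add_zero]
      refine Finset.sum_congr rfl fun i hi => ?_
      have hne := Finset.ne_of_mem_erase hi
      rw [hLapp]
      rw [if_neg hne, Real.norm_eq_abs, sq_abs, mul_pow, Real.sq_sqrt (hσpos i hne)]
    have hauxnorm : ∀ w : Fin (n+1) → ℝ,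
        auxObj σ (P.mulVec w) = (1/2) * ‖L w‖ ^ 2 - (1/2) * |σ (Fin.last n)| := by
      intro w
      rw [hLnorm]
      rfl
    obtain ⟨vs, hvsS, hvsmin⟩ := hSpoly.exists_min_norm hSne L
    refine ⟨ε, hε, P.mulVec vs, vs, ⟨hvsS.1, rfl, hvsS.2⟩, ?_, ?_⟩
    · have h1 : auxObj σ (P.mulVec vs) ≤ auxObj σ (P.mulVec v₀) := by
        rw [hauxnorm, hauxnorm]
        have := hvsmin v₀ ⟨hv₀C, hy₀l⟩
        have hsq' := pow_le_pow_left₀ (norm_nonneg (L vs)) this 2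
        linarith
      have h2 : auxObj σ (P.mulVec v₀) < 0 := by
        rw [auxcalc (P.mulVec v₀) (by rw [hy₀l]; exact hε2)]
        rw [hgdef] at hgv₀
        linarith
      linarith
    · intro y' vhat' ⟨hv'C, hy', hy'l⟩
      rw [hy', hauxnorm, hauxnorm]
      have hmem : vhat' ∈ S := ⟨hv'C, by rw [← hy']; exact hy'l⟩
      have := hvsmin vhat' hmem
      have hsq' := pow_le_pow_left₀ (norm_nonneg (L vs)) this 2
      linarith
  · -- a feasible negative value → unbounded
    rintro ⟨ε, hε, y, vhat, ⟨hvC, hy, hyl⟩, hneg, -⟩ M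
    have hε2 : ε ^ 2 = 1 := hsq ε hε
    have hval : auxObj σ y = (1/2) * g vhat := by
      rw [auxcalc y (by rw [hyl]; exact hε2), hy]
    set c : ℝ := (1/2) * g vhat with hcdef
    have hc : c < 0 := hval ▸ hneg
    set t : ℝ := Real.sqrt ((|M| + 1) / (-c)) with htdef
    have ht2 : t ^ 2 = (|M| + 1) / (-c) :=
      Real.sq_sqrt (div_nonneg (by positivity) (by linarith))
    refine ⟨t • vhat, cone vhat hvC t (Real.sqrt_nonneg _), ?_⟩
    rw [hquad, gscale]
    have : (1/2) * (t ^ 2 * g vhat) = t ^ 2 * c := by rw [hcdef]; ring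
    rw [this, ht2]
    have h1 : (|M| + 1) / (-c) * c = -(|M| + 1) := by
      rw [div_mul_eq_mul_div, mul_div_assoc, div_neg, div_self hc.ne]
      ring
    rw [h1]
    have := neg_abs_le M
    linarith
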